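/- arXiv:2206.01295 — 3 statements merged into one kernel-verified Lean document; each statement's English description precedes it below -/
import Mathlib

section
/- If a finite multiplicity set {P_1,...,P_m} ⊆ Δ_c contains all c standard basis vectors e_1,...,e_c (the vertices of the simplex), then its Rashomon Capacity equals log c, i.e., m_C = 2^C = c. -/
open BigOperators

/-- probability simplex on `Fin c` -/
def simplex (c : ℕ) : Set (Fin c → ℝ) :=
  {p | (∀ k, 0 ≤ p k) ∧ ∑ k, p k = 1}

/-- KL divergence (base-2), extended-real valued with the usual conventions. -/
noncomputable def klDiv {c : ℕ} (p q : Fin c → ℝ) : EReal :=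
  ∑ k, if p k = 0 then (0 : EReal)
       else if q k = 0 then ⊤
       else ((p k * Real.logb 2 (p k / q k) : ℝ) : EReal)

/-- Rashomon Capacity of the scores `P 1, …, P m`. -/
noncomputable def capacity {m c : ℕ} (P : Fin m → Fin c → ℝ) : EReal :=
  ⨆ α : simplex m, ⨅ q : simplex c, ∑ j, ((α.1 j : ℝ) : EReal) * klDiv (P j) q.1
lemma ereal_mul_nonneg {a b : EReal} (ha : 0 ≤ a) (hb : 0 ≤ b) : 0 ≤ a * b := by
  rcases eq_or_lt_of_le ha with h|h
  · rw [← h, zero_mul]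
  rcases eq_or_lt_of_le hb with h'|h'
  · rw [← h', mul_zero]
  · exact (EReal.mul_pos h h').le

lemma ereal_coe_sum {ι : Type*} (s : Finset ι) (f : ι → ℝ) :
    ((∑ i ∈ s, f i : ℝ) : EReal) = ∑ i ∈ s, ((f i : ℝ) : EReal) := by
  induction s using Finset.cons_induction with
  | empty => simp
  | cons a s ha ih => rw [Finset.sum_cons, Finset.sum_cons, EReal.coe_add, ih]

lemma simplex_le_one {c : ℕ} {p : Fin c → ℝ} (hp : p ∈ simplex c) (k : Fin c) : p k ≤ 1 := by
  rcases hp with ⟨h0, h1⟩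
  calc p k ≤ ∑ i, p i := Finset.single_le_sum (fun i _ => h0 i) (Finset.mem_univ k)
    _ = 1 := h1

lemma uniform_mem {c : ℕ} (hc : 0 < c) : (fun _ : Fin c => (c : ℝ)⁻¹) ∈ simplex c := by
  constructor
  · intro k; positivity
  · simp [Finset.sum_const]
    field_simp

lemma klDiv_uniform {c : ℕ} (hc : 0 < c) {p : Fin c → ℝ} (hp : p ∈ simplex c) :
    ∃ r : ℝ, klDiv p (fun _ => (c : ℝ)⁻¹) = (r : EReal) ∧ r ≤ Real.logb 2 c := by
  have hcR : (0:ℝ) < c := by exact_mod_cast hc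
  refine ⟨∑ k, if p k = 0 then 0 else p k * Real.logb 2 (p k * c), ?_, ?_⟩
  · rw [klDiv, ereal_coe_sum]
    refine Finset.sum_congr rfl fun k _ => ?_
    by_cases h : p k = 0
    · simp [h]
    · have : (c:ℝ)⁻¹ ≠ 0 := by positivity
      rw [if_neg h, if_neg this, if_neg h, div_inv_eq_mul]
  · have : ∀ k : Fin c, (if p k = 0 then (0:ℝ) else p k * Real.logb 2 (p k * c))
        ≤ p k * Real.logb 2 c := by
      intro k
      by_cases h : p k = 0
      · simp [h]
      · have hpk : 0 < p k := lt_of_le_of_ne (hp.1 k) (Ne.symm h)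
        rw [if_neg h]
        have : Real.logb 2 (p k * c) = Real.logb 2 (p k) + Real.logb 2 c :=
          Real.logb_mul h (by positivity)
        rw [this, mul_add]
        have hlog : p k * Real.logb 2 (p k) ≤ 0 :=
          mul_nonpos_of_nonneg_of_nonpos hpk.le
            (Real.logb_nonpos (by norm_num) hpk.le (simplex_le_one hp k))
        linarith
    calc _ ≤ ∑ k, p k * Real.logb 2 c := Finset.sum_le_sum fun k _ => this k
      _ = Real.logb 2 c := by rw [← Finset.sum_mul, hp.2, one_mul]

lemma klDiv_vertex {c : ℕ} (k : Fin c) (q : Fin c → ℝ) :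
    klDiv (fun i => if i = k then (1:ℝ) else 0) q
      = if q k = 0 then ⊤ else ((Real.logb 2 (1 / q k) : ℝ) : EReal) := by
  rw [klDiv]
  rw [Finset.sum_eq_single k]
  · simp
  · intro i _ hik; simp [hik]
  · simp

lemma jensen_log {c : ℕ} (hc : 0 < c) {q : Fin c → ℝ} (hq : q ∈ simplex c)
    (hpos : ∀ k, 0 < q k) :
    Real.logb 2 c ≤ ∑ k, (c:ℝ)⁻¹ * Real.logb 2 (1 / q k) := by
  have hcR : (0:ℝ) < c := by exact_mod_cast hc
  have hwsum : ∑ _k : Fin c, (c:ℝ)⁻¹ = 1 := by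
    simp [Finset.sum_const]; field_simp
  have hJ := (strictConcaveOn_log_Ioi.concaveOn).le_map_sum
    (t := Finset.univ) (w := fun _ : Fin c => (c:ℝ)⁻¹) (p := q)
    (fun _ _ => by positivity) hwsum (fun k _ => hpos k)
  simp only [smul_eq_mul] at hJ
  have hqs : ∑ k, (c:ℝ)⁻¹ * q k = (c:ℝ)⁻¹ := by
    rw [← Finset.mul_sum, hq.2, mul_one]
  rw [hqs, Real.log_inv] at hJ
  have h2 : (0:ℝ) < Real.log 2 := Real.log_pos (by norm_num)
  have key : ∀ k : Fin c, (c:ℝ)⁻¹ * Real.logb 2 (1 / q k)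
      = -((c:ℝ)⁻¹ * Real.log (q k)) / Real.log 2 := by
    intro k
    rw [Real.logb, Real.log_div one_ne_zero (hpos k).ne', Real.log_one]
    field_simp
    ring
  calc Real.logb 2 c = Real.log c / Real.log 2 := rfl
    _ ≤ (-∑ k, (c:ℝ)⁻¹ * Real.log (q k)) / Real.log 2 := by
        have := hJ
        gcongr
        linarith
    _ = ∑ k, (c:ℝ)⁻¹ * Real.logb 2 (1 / q k) := by
        rw [Finset.sum_congr rfl fun k _ => key k, ← Finset.sum_div, ← Finset.sum_neg_distrib]


/-- if the multiplicity set contains all `c` vertices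
`e_1, …, e_c` of the simplex, its Rashomon Capacity equals `log₂ c`,
i.e. `m_C = 2^C = c`. -/
theorem rashomon_capacity_eq_log_of_vertices (m c : ℕ) (hc : 0 < c)
    (P : Fin m → Fin c → ℝ) (hP : ∀ j, P j ∈ simplex c)
    (hvert : ∀ k : Fin c, ∃ j : Fin m, P j = fun i => if i = k then (1 : ℝ) else 0) :
    capacity P = ((Real.logb 2 c : ℝ) : EReal) ∧
      (2 : ℝ) ^ (Real.logb 2 c) = (c : ℝ) := by
  have hcR : (0:ℝ) < c := by exact_mod_cast hc
  refine ⟨?_, Real.rpow_logb (by norm_num) (by norm_num) hcR⟩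
  apply le_antisymm
  · -- upper bound via uniform q
    apply iSup_le
    rintro ⟨α, hα⟩
    refine iInf_le_of_le ⟨_, uniform_mem hc⟩ ?_
    choose r hr hrle using fun j => klDiv_uniform hc (hP j)
    calc ∑ j, ((α j : ℝ) : EReal) * klDiv (P j) (fun _ => (c:ℝ)⁻¹)
        = ∑ j, ((α j * r j : ℝ) : EReal) := by
          refine Finset.sum_congr rfl fun j _ => ?_
          rw [hr j, ← EReal.coe_mul]
      _ = ((∑ j, α j * r j : ℝ) : EReal) := (ereal_coe_sum _ _).symm
      _ ≤ ((Real.logb 2 c : ℝ) : EReal) := by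
          apply EReal.coe_le_coe_iff.mpr
          calc ∑ j, α j * r j ≤ ∑ j, α j * Real.logb 2 c :=
                Finset.sum_le_sum fun j _ => mul_le_mul_of_nonneg_left (hrle j) (hα.1 j)
            _ = Real.logb 2 c := by rw [← Finset.sum_mul, hα.2, one_mul]
  · -- lower bound via α uniform on the vertices
    choose σ hσ using hvert
    have hinj : Function.Injective σ := by
      intro k1 k2 h
      have h1 := hσ k1
      rw [h, hσ k2] at h1
      have := congrFun h1 k1
      by_contra hne
      simp [Ne.symm hne] at this
      exact hne this
    set img := Finset.image σ Finset.univ with himg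
    set α : Fin m → ℝ := fun j => if j ∈ img then (c:ℝ)⁻¹ else 0 with hαdef
    have hαmem : α ∈ simplex m := by
      constructor
      · intro j
        simp only [hαdef]
        split <;> positivity
      · have : ∑ j, α j = ∑ j ∈ img, (c:ℝ)⁻¹ := by
          exact Fintype.sum_ite_mem img fun _ => (c:ℝ)⁻¹
        rw [this, Finset.sum_const, Finset.card_image_of_injective _ hinj,
          Finset.card_univ, Fintype.card_fin, nsmul_eq_mul]
        field_simp
    refine le_trans ?_ (le_iSup _ (⟨α, hαmem⟩ : simplex m))
    apply le_iInf
    rintro ⟨q, hq⟩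
    have hsum : ∑ j, ((α j : ℝ) : EReal) * klDiv (P j) q
        = ∑ k, (((c:ℝ)⁻¹ : ℝ) : EReal) * klDiv (fun i => if i = k then (1:ℝ) else 0) q := by
      rw [← Finset.sum_subset (Finset.subset_univ img) (fun j _ hj => by
        have : α j = 0 := if_neg hj
        rw [this, EReal.coe_zero, zero_mul])]
      rw [himg, Finset.sum_image (fun k _ k' _ h => hinj h)]
      refine Finset.sum_congr rfl fun k _ => ?_
      rw [hσ k]
      congr 2
      simp [hαdef, himg]
    rw [hsum]
    by_cases hzero : ∃ k, q k = 0
    · obtain ⟨k0, hk0⟩ := hzero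
      have htop : (((c:ℝ)⁻¹ : ℝ) : EReal) * klDiv (fun i => if i = k0 then (1:ℝ) else 0) q = ⊤ := by
        rw [klDiv_vertex, if_pos hk0, EReal.coe_mul_top_of_pos (by positivity)]
      have hterms : ∀ k ∈ Finset.univ,
          (0:EReal) ≤ (((c:ℝ)⁻¹ : ℝ) : EReal) * klDiv (fun i => if i = k then (1:ℝ) else 0) q := by
        intro k _
        apply ereal_mul_nonneg (EReal.coe_nonneg.mpr (by positivity))
        rw [klDiv_vertex]
        split
        · exact le_top
        · rename_i hqk
          apply EReal.coe_nonneg.mpr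
          have hqk' : 0 < q k := lt_of_le_of_ne (hq.1 k) (Ne.symm hqk)
          apply Real.logb_nonneg (by norm_num)
          rw [le_div_iff₀ hqk', one_mul]
          exact simplex_le_one hq k
      have hle := Finset.single_le_sum hterms (Finset.mem_univ k0)
      rw [htop] at hle
      exact le_trans le_top hle
    · push_neg at hzero
      have hpos : ∀ k, 0 < q k := fun k => lt_of_le_of_ne (hq.1 k) (Ne.symm (hzero k))
      have heq : ∑ k, (((c:ℝ)⁻¹ : ℝ) : EReal) * klDiv (fun i => if i = k then (1:ℝ) else 0) q
          = ((∑ k, (c:ℝ)⁻¹ * Real.logb 2 (1 / q k) : ℝ) : EReal) := by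
        rw [ereal_coe_sum]
        refine Finset.sum_congr rfl fun k _ => ?_
        rw [klDiv_vertex, if_neg (hzero k), ← EReal.coe_mul]
      rw [heq]
      exact EReal.coe_le_coe_iff.mpr (jensen_log hc hq hpos)
end

section
/- If the Rashomon Capacity of a finite multiplicity set {P_1,...,P_m} with a capacity-achieving input distribution equals log c (its maximum), then the set contains all c vertices e_1,...,e_c of the probability simplex among the distributions receiving positive weight, and in particular every P_j with positive capacity-achieving weight is a point mass. -/
open BigOperators

def erealCoeHom : ℝ →+ EReal := ⟨⟨(fun x => (x : EReal)), EReal.coe_zero⟩, EReal.coe_add⟩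

lemma ereal_coe_sum_s5 {n : ℕ} (f : Fin n → ℝ) :
    ((∑ i, f i : ℝ) : EReal) = ∑ i, ((f i : ℝ) : EReal) :=
  map_sum erealCoeHom f Finset.univ

/-- if the Rashomon Capacity of `{P_1,…,P_m}` equals its maximum
`log₂ c` and `α` is a capacity-achieving input distribution, then every vertex
`e_k` of the simplex appears among the distributions with positive weight, and
every `P j` with positive weight is a point mass. -/
theorem rashomon_capacity_max_converse (m c : ℕ) (hc : 0 < c)
    (P : Fin m → Fin c → ℝ) (hP : ∀ j, P j ∈ simplex c)
    (α : Fin m → ℝ) (hα : α ∈ simplex m)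
    (hach : (⨅ q : simplex c, ∑ j, ((α j : ℝ) : EReal) * klDiv (P j) q.1) = capacity P)
    (hcap : capacity P = ((Real.logb 2 c : ℝ) : EReal)) :
    (∀ k : Fin c, ∃ j : Fin m, 0 < α j ∧ P j = fun i => if i = k then (1 : ℝ) else 0) ∧
    (∀ j : Fin m, 0 < α j → ∃ k : Fin c, P j = fun i => if i = k then (1 : ℝ) else 0) := by
  classical
  set q : Fin c → ℝ := fun k => ∑ j, α j * P j k with hqdef
  have hq0 : ∀ k, 0 ≤ q k := fun k =>
    Finset.sum_nonneg fun j _ => mul_nonneg (hα.1 j) ((hP j).1 k)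
  have hq1 : ∑ k, q k = 1 := by
    rw [hqdef]
    rw [Finset.sum_comm]
    simp_rw [← Finset.mul_sum]
    calc ∑ j, α j * ∑ k, P j k = ∑ j, α j := by
          apply Finset.sum_congr rfl; intro j _; rw [(hP j).2, mul_one]
      _ = 1 := hα.2
  have hqmem : q ∈ simplex c := ⟨hq0, hq1⟩
  have hqpos : ∀ j k, 0 < α j → 0 < P j k → 0 < q k := by
    intro j k hj hp
    exact lt_of_lt_of_le (mul_pos hj hp)
      (Finset.single_le_sum (f := fun i => α i * P i k)
        (fun i _ => mul_nonneg (hα.1 i) ((hP i).1 k)) (Finset.mem_univ j))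
  set D : Fin m → ℝ := fun j => ∑ k, P j k * Real.logb 2 (P j k / q k) with hDdef
  have hkl : ∀ j, 0 < α j → klDiv (P j) q = ((D j : ℝ) : EReal) := by
    intro j hj
    rw [hDdef]; unfold klDiv
    rw [ereal_coe_sum_s5]
    apply Finset.sum_congr rfl
    intro k _
    by_cases h0 : P j k = 0
    · simp [h0]
    · have hq' : q k ≠ 0 :=
        ne_of_gt (hqpos j k hj (lt_of_le_of_ne ((hP j).1 k) (Ne.symm h0)))
      simp [h0, hq']
  have hsum : ∑ j, ((α j : ℝ) : EReal) * klDiv (P j) q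
      = (((∑ j, α j * D j) : ℝ) : EReal) := by
    rw [ereal_coe_sum_s5]
    apply Finset.sum_congr rfl
    intro j _
    rcases eq_or_lt_of_le (hα.1 j) with h | h
    · rw [← h]; simp
    · rw [hkl j h, ← EReal.coe_mul]
  -- inf ≤ value at q
  have hle : ((Real.logb 2 c : ℝ) : EReal) ≤ (((∑ j, α j * D j) : ℝ) : EReal) := by
    rw [← hsum, ← hcap, ← hach]
    exact iInf_le _ (⟨q, hqmem⟩ : simplex c)
  have hS : Real.logb 2 c ≤ ∑ j, α j * D j := by exact_mod_cast hle
  -- decomposition S = A - B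
  set A : ℝ := ∑ j, α j * ∑ k, P j k * Real.logb 2 (P j k) with hAdef
  set B : ℝ := ∑ k, q k * Real.logb 2 (q k) with hBdef
  have hsplit : ∑ j, α j * D j = A - B := by
    have hB : B = ∑ j, α j * ∑ k, P j k * Real.logb 2 (q k) := by
      rw [hBdef]
      simp_rw [Finset.mul_sum, ← mul_assoc]
      rw [Finset.sum_comm]
      apply Finset.sum_congr rfl
      intro k _
      rw [hqdef, Finset.sum_mul]
    rw [hAdef, hB, ← Finset.sum_sub_distrib]
    apply Finset.sum_congr rfl
    intro j _
    rcases eq_or_lt_of_le (hα.1 j) with h | h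
    · rw [← h]; ring
    · rw [← mul_sub, ← Finset.sum_sub_distrib]
      congr 1
      apply Finset.sum_congr rfl
      intro k _
      by_cases h0 : P j k = 0
      · simp [h0]
      · have hq' : q k ≠ 0 :=
          ne_of_gt (hqpos j k h (lt_of_le_of_ne ((hP j).1 k) (Ne.symm h0)))
        rw [Real.logb_div h0 hq', mul_sub]
  have hPle1 : ∀ j k, P j k ≤ 1 := by
    intro j k
    rw [← (hP j).2]
    exact Finset.single_le_sum (fun i _ => (hP j).1 i) (Finset.mem_univ k)
  have hA_nonpos : A ≤ 0 := by
    apply Finset.sum_nonpos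
    intro j _
    apply mul_nonpos_of_nonneg_of_nonpos (hα.1 j)
    apply Finset.sum_nonpos
    intro k _
    exact mul_nonpos_of_nonneg_of_nonpos ((hP j).1 k)
      (Real.logb_nonpos one_lt_two ((hP j).1 k) (hPle1 j k))
  -- natural-log entropy bound
  have hcpos : (0:ℝ) < c := Nat.cast_pos.mpr hc
  set f : Fin c → ℝ := fun k => q k * Real.log (c * q k) with hfdef
  have hf_ge : ∀ k, q k - 1/c ≤ f k := by
    intro k
    rcases eq_or_lt_of_le (hq0 k) with h | h
    · rw [hfdef]; simp [← h]
    · have ht : (0:ℝ) < c * q k := mul_pos hcpos h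
      have hlog : 1 - 1/(c * q k) ≤ Real.log (c * q k) := by
        have := Real.log_le_sub_one_of_pos (show (0:ℝ) < (c * q k)⁻¹ by positivity)
        rw [Real.log_inv] at this
        rw [one_div]
        linarith
      have : q k * (1 - 1/(c * q k)) ≤ q k * Real.log (c * q k) :=
        mul_le_mul_of_nonneg_left hlog (le_of_lt h)
      have heq : q k * (1 - 1/(c * q k)) = q k - 1/c := by
        field_simp
      rw [hfdef]; dsimp only; linarith [heq ▸ this]
  have hf_sum : ∑ k, f k = Real.log c + ∑ k, q k * Real.log (q k) := by
    have : ∀ k, f k = q k * Real.log c + q k * Real.log (q k) := by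
      intro k
      rcases eq_or_lt_of_le (hq0 k) with h | h
      · rw [hfdef]; simp [← h]
      · rw [hfdef]; dsimp only
        rw [Real.log_mul (ne_of_gt hcpos) (ne_of_gt h), mul_add]
    rw [Finset.sum_congr rfl (fun k _ => this k), Finset.sum_add_distrib,
      ← Finset.sum_mul, hq1, one_mul]
  have hsum_base : ∑ k, (q k - 1/c) = 0 := by
    rw [Finset.sum_sub_distrib, hq1]
    simp
    field_simp
    norm_num
  have hf_nonneg : 0 ≤ ∑ k, f k := by
    rw [← hsum_base]
    exact Finset.sum_le_sum fun k _ => hf_ge k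
  -- relate B to natural log
  have hlog2 : (0:ℝ) < Real.log 2 := Real.log_pos one_lt_two
  have hBlog : B = (∑ k, q k * Real.log (q k)) / Real.log 2 := by
    rw [hBdef, Finset.sum_div]
    apply Finset.sum_congr rfl
    intro k _
    rw [Real.logb, mul_div_assoc]
  have hlogbc : Real.logb 2 c = Real.log c / Real.log 2 := rfl
  -- entropy bound: -B ≤ logb 2 c
  have hHle : -B ≤ Real.logb 2 c := by
    rw [hBlog, hlogbc, ← neg_div, div_le_div_iff_of_pos_right hlog2]
    linarith [hf_nonneg, hf_sum]
  -- equalities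
  have hA0 : A = 0 := le_antisymm hA_nonpos (by linarith [hsplit ▸ hS])
  have hf0 : ∑ k, f k = 0 := by
    have h1 : Real.logb 2 c ≤ -B := by
      have := hsplit ▸ hS
      linarith
    rw [hBlog, hlogbc, ← neg_div, div_le_div_iff_of_pos_right hlog2] at h1
    linarith [hf_sum]
  -- point masses from A = 0
  have hterm0 : ∀ j, 0 < α j → ∀ k, P j k = 0 ∨ P j k = 1 := by
    intro j hj k
    have hall := (Finset.sum_eq_zero_iff_of_nonpos (fun j _ =>
      mul_nonpos_of_nonneg_of_nonpos (hα.1 j) (Finset.sum_nonpos fun k _ =>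
        mul_nonpos_of_nonneg_of_nonpos ((hP j).1 k)
          (Real.logb_nonpos one_lt_two ((hP j).1 k) (hPle1 j k))))).mp hA0
    have hEj : ∑ k, P j k * Real.logb 2 (P j k) = 0 := by
      have := hall j (Finset.mem_univ j)
      rcases mul_eq_zero.mp this with h | h
      · exact absurd h (ne_of_gt hj)
      · exact h
    have hEterm := (Finset.sum_eq_zero_iff_of_nonpos (fun k _ =>
      mul_nonpos_of_nonneg_of_nonpos ((hP j).1 k)
        (Real.logb_nonpos one_lt_two ((hP j).1 k) (hPle1 j k)))).mp hEj
    have hk := hEterm k (Finset.mem_univ k)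
    rcases mul_eq_zero.mp hk with h | h
    · exact Or.inl h
    · by_cases h0 : P j k = 0
      · exact Or.inl h0
      · exact Or.inr (Real.eq_one_of_pos_of_logb_eq_zero one_lt_two
          (lt_of_le_of_ne ((hP j).1 k) (Ne.symm h0)) h)
  have hpm : ∀ j, 0 < α j → ∃ k, P j = fun i => if i = k then (1:ℝ) else 0 := by
    intro j hj
    set T := Finset.univ.filter (fun k => P j k = 1) with hT
    have hcard : (T.card : ℝ) = 1 := by
      have h1 : ∑ k, P j k = 1 := (hP j).2
      rw [← Finset.sum_filter_add_sum_filter_not Finset.univ (fun k => P j k = 1)] at h1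
      have h2 : ∑ k ∈ T, P j k = T.card := by
        rw [Finset.sum_congr rfl (fun k hk => (Finset.mem_filter.mp hk).2)]
        simp
        rfl
      have h3 : ∑ k ∈ Finset.univ.filter (fun k => ¬ P j k = 1), P j k = 0 := by
        apply Finset.sum_eq_zero
        intro k hk
        rcases hterm0 j hj k with h | h
        · exact h
        · exact absurd h (Finset.mem_filter.mp hk).2
      rw [h3, add_zero] at h1
      rw [← h2, h1]
    have hcard' : T.card = 1 := by exact_mod_cast hcard
    obtain ⟨k, hk⟩ := Finset.card_eq_one.mp hcard'
    refine ⟨k, funext fun i => ?_⟩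
    by_cases hik : i = k
    · subst hik
      have : i ∈ T := hk ▸ Finset.mem_singleton_self i
      simp [(Finset.mem_filter.mp this).2]
    · have : i ∉ T := by rw [hk]; simpa using hik
      have hne : P j i ≠ 1 := fun h => this (Finset.mem_filter.mpr ⟨Finset.mem_univ i, h⟩)
      rcases hterm0 j hj i with h | h
      · simp [hik, h]
      · exact absurd h hne
  -- uniformity from ∑ f = 0
  have huni : ∀ k, q k = 1 / c := by
    by_contra hcon
    push_neg at hcon
    obtain ⟨k0, hk0⟩ := hcon
    have hstrict : q k0 - 1/c < f k0 := by
      rcases eq_or_lt_of_le (hq0 k0) with h | h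
      · rw [hfdef]; simp [← h]
        positivity
      · have ht : (0:ℝ) < c * q k0 := mul_pos hcpos h
        have htne : (c : ℝ) * q k0 ≠ 1 := by
          intro habs
          apply hk0
          field_simp
          linarith [habs]
        have hlog : 1 - 1/(c * q k0) < Real.log (c * q k0) := by
          have := Real.log_lt_sub_one_of_pos (show (0:ℝ) < (c * q k0)⁻¹ by positivity)
            (by rw [ne_eq, inv_eq_one]; exact htne)
          rw [Real.log_inv] at this
          rw [one_div]
          linarith
        have hmul : q k0 * (1 - 1/(c * q k0)) < q k0 * Real.log (c * q k0) :=
          (mul_lt_mul_iff_right₀ h).mpr hlog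
        have heq : q k0 * (1 - 1/(c * q k0)) = q k0 - 1/c := by
          field_simp
        rw [hfdef]; dsimp only; linarith [heq ▸ hmul]
    have : (0:ℝ) < ∑ k, f k := by
      calc (0:ℝ) = ∑ k, (q k - 1/c) := hsum_base.symm
        _ < ∑ k, f k := Finset.sum_lt_sum (fun k _ => hf_ge k) ⟨k0, Finset.mem_univ k0, hstrict⟩
    linarith [hf0]
  constructor
  · intro k
    have hqk : 0 < q k := by rw [huni k]; positivity
    have hne : ∑ j, α j * P j k ≠ 0 := ne_of_gt hqk
    obtain ⟨j, _, hj⟩ := Finset.exists_ne_zero_of_sum_ne_zero hne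
    have hαj : 0 < α j := lt_of_le_of_ne (hα.1 j) (fun h => hj (by rw [← h, zero_mul]))
    have hPjk : 0 < P j k :=
      lt_of_le_of_ne ((hP j).1 k) (fun h => hj (by rw [← h, mul_zero]))
    obtain ⟨k', hk'⟩ := hpm j hαj
    have : k = k' := by
      by_contra hkk
      rw [hk'] at hPjk
      simp [hkk] at hPjk
    exact ⟨j, hαj, this ▸ hk'⟩
  · intro j hj
    exact hpm j hj
end

section
/- For any finite multiplicity set M_ε(x) ⊆ Δ_c of arbitrary cardinality m, there exists a subset A ⊆ M_ε(x) with |A| ≤ c such that the Rashomon Capacity of A equals the Rashomon Capacity of M_ε(x), i.e., at most c scores suffice to achieve the capacity of the whole set. -/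
open BigOperators

/-- Rashomon Capacity of a finite set `S` of score distributions. -/
noncomputable def capacityF {c : ℕ} (S : Finset (Fin c → ℝ)) : EReal :=
  ⨆ α : {α : (Fin c → ℝ) → ℝ // (∀ p, 0 ≤ α p) ∧ ∑ p ∈ S, α p = 1},
    ⨅ q : simplex c, ∑ p ∈ S, ((α.1 p : ℝ) : EReal) * klDiv p q.1

namespace RashomonAux

/-- negative entropy functional (base 2) -/
noncomputable def Hfun {c : ℕ} (p : Fin c → ℝ) : ℝ := ∑ k, p k * Real.logb 2 (p k)

/-- real-valued KL (meaningful when the support condition holds) -/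
noncomputable def realKl {c : ℕ} (p q : Fin c → ℝ) : ℝ :=
  ∑ k, if p k = 0 then 0 else p k * Real.logb 2 (p k / q k)

lemma coe_sum {ι : Type*} (s : Finset ι) (f : ι → ℝ) :
    ((∑ i ∈ s, f i : ℝ) : EReal) = ∑ i ∈ s, ((f i : ℝ) : EReal) :=
  map_sum (⟨⟨Real.toEReal, EReal.coe_zero⟩, EReal.coe_add⟩ : ℝ →+ EReal) f s

lemma sum_ne_bot {ι : Type*} (s : Finset ι) (f : ι → EReal) (h : ∀ i ∈ s, f i ≠ ⊥) :
    ∑ i ∈ s, f i ≠ ⊥ := by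
  classical
  induction s using Finset.induction_on with
  | empty => simp
  | insert _ _ hnotmem ih =>
    rw [Finset.sum_insert hnotmem, Ne, EReal.add_eq_bot_iff]
    push_neg
    exact ⟨h _ (Finset.mem_insert_self _ _), ih fun i hi => h i (Finset.mem_insert_of_mem hi)⟩

lemma sum_eq_top {ι : Type*} (s : Finset ι) (f : ι → EReal) (h : ∀ i ∈ s, f i ≠ ⊥)
    {i₀ : ι} (hi₀ : i₀ ∈ s) (htop : f i₀ = ⊤) : ∑ i ∈ s, f i = ⊤ := by
  classical
  rw [← Finset.add_sum_erase _ _ hi₀, htop]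
  exact EReal.top_add_of_ne_bot (sum_ne_bot _ _ fun i hi => h i (Finset.mem_of_mem_erase hi))

lemma klDiv_ne_bot {c : ℕ} (p q : Fin c → ℝ) : klDiv p q ≠ ⊥ := by
  apply sum_ne_bot
  intro k _
  split_ifs <;> simp [← EReal.coe_mul]

lemma coe_mul_ne_bot {a : ℝ} (ha : 0 ≤ a) {x : EReal} (hx : x ≠ ⊥) : (a : EReal) * x ≠ ⊥ := by
  rcases eq_or_lt_of_le ha with h | h
  · rw [← h, EReal.coe_zero, EReal.zero_mul]; simp
  · induction x with
    | bot => exact absurd rfl hx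
    | coe r => rw [← EReal.coe_mul]; exact EReal.coe_ne_bot _
    | top => rw [EReal.mul_top_of_pos (by exact_mod_cast h)]; simp

lemma klDiv_eq_coe {c : ℕ} {p q : Fin c → ℝ} (h : ∀ k, q k = 0 → p k = 0) :
    klDiv p q = ((realKl p q : ℝ) : EReal) := by
  rw [realKl, coe_sum, klDiv]
  apply Finset.sum_congr rfl
  intro k _
  by_cases hp : p k = 0
  · simp [hp]
  · have hq : q k ≠ 0 := fun hq => hp (h k hq)
    simp [hp, hq]

lemma klDiv_eq_top {c : ℕ} {p q : Fin c → ℝ} {k : Fin c} (hq : q k = 0) (hp : p k ≠ 0) :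
    klDiv p q = ⊤ := by
  apply sum_eq_top _ _ _ (Finset.mem_univ k)
  · simp [hp, hq]
  · intro i _
    split_ifs <;> simp [← EReal.coe_mul]

lemma realKl_eq {c : ℕ} {p q : Fin c → ℝ} (h : ∀ k, q k = 0 → p k = 0) :
    realKl p q = Hfun p - ∑ k, p k * Real.logb 2 (q k) := by
  rw [realKl, Hfun, ← Finset.sum_sub_distrib]
  apply Finset.sum_congr rfl
  intro k _
  by_cases hp : p k = 0
  · simp [hp]
  · have hq : q k ≠ 0 := fun h0 => hp (h k h0)
    rw [if_neg hp, Real.logb_div hp hq]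
    ring

lemma sum_realKl_eq {c : ℕ} (S : Finset (Fin c → ℝ))
    (q : Fin c → ℝ) (v : (Fin c → ℝ) → ℝ)
    (hv : ∀ p ∈ S, v p ≠ 0 → ∀ k, q k = 0 → p k = 0) :
    ∑ p ∈ S, v p * realKl p q
      = ∑ p ∈ S, v p * Hfun p - ∑ k, (∑ p ∈ S, v p * p k) * Real.logb 2 (q k) := by
  have h1 : ∑ p ∈ S, v p * realKl p q
      = ∑ p ∈ S, (v p * Hfun p - v p * ∑ k, p k * Real.logb 2 (q k)) := by
    apply Finset.sum_congr rfl
    intro p hp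
    by_cases hv0 : v p = 0
    · simp [hv0]
    · rw [realKl_eq (hv p hp hv0)]; ring
  rw [h1, Finset.sum_sub_distrib]
  congr 1
  calc ∑ p ∈ S, v p * ∑ k, p k * Real.logb 2 (q k)
      = ∑ p ∈ S, ∑ k, v p * p k * Real.logb 2 (q k) := by
        apply Finset.sum_congr rfl
        intro p _
        rw [Finset.mul_sum]
        apply Finset.sum_congr rfl
        intro k _
        ring
    _ = ∑ k, ∑ p ∈ S, v p * p k * Real.logb 2 (q k) := Finset.sum_comm
    _ = ∑ k, (∑ p ∈ S, v p * p k) * Real.logb 2 (q k) := by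
        apply Finset.sum_congr rfl
        intro k _
        rw [Finset.sum_mul]

/-- Compensation inequality: if `β` has the same mixture as `w` and at least the same
average negative entropy, then for every `q` the `β`-average of `klDiv · q`
dominates the `w`-average. -/
lemma key {c : ℕ} (S : Finset (Fin c → ℝ)) (hSsub : ∀ p ∈ S, p ∈ simplex c)
    (q : Fin c → ℝ) (w β : (Fin c → ℝ) → ℝ)
    (hw : ∀ p ∈ S, 0 ≤ w p) (hβ : ∀ p ∈ S, 0 ≤ β p)
    (mix : ∀ k, ∑ p ∈ S, β p * p k = ∑ p ∈ S, w p * p k)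
    (ent : ∑ p ∈ S, w p * Hfun p ≤ ∑ p ∈ S, β p * Hfun p) :
    ∑ p ∈ S, ((w p : ℝ) : EReal) * klDiv p q ≤ ∑ p ∈ S, ((β p : ℝ) : EReal) * klDiv p q := by
  by_cases hcase : ∃ p ∈ S, β p ≠ 0 ∧ ∃ k, q k = 0 ∧ p k ≠ 0
  · obtain ⟨p₀, hp₀S, hβ0, k, hqk, hpk⟩ := hcase
    have hterm : ((β p₀ : ℝ) : EReal) * klDiv p₀ q = ⊤ := by
      rw [klDiv_eq_top hqk hpk]
      exact EReal.mul_top_of_pos (by exact_mod_cast (hβ p₀ hp₀S).lt_of_ne (Ne.symm hβ0))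
    have htop : ∑ p ∈ S, ((β p : ℝ) : EReal) * klDiv p q = ⊤ :=
      sum_eq_top _ _ (fun p hp => coe_mul_ne_bot (hβ p hp) (klDiv_ne_bot p q)) hp₀S hterm
    rw [htop]; exact le_top
  · push_neg at hcase
    have hβcond : ∀ p ∈ S, β p ≠ 0 → ∀ k, q k = 0 → p k = 0 := by
      intro p hp hb k hk
      by_contra hne
      exact hne (hcase p hp hb k hk)
    have hwcond : ∀ p ∈ S, w p ≠ 0 → ∀ k, q k = 0 → p k = 0 := by
      intro p hp hwp k hqk
      have hsum : ∑ x ∈ S, w x * x k = 0 := by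
        rw [← mix k]
        apply Finset.sum_eq_zero
        intro x hx
        by_cases hb : β x = 0
        · simp [hb]
        · rw [hβcond x hx hb k hqk, mul_zero]
      have hnn : ∀ x ∈ S, 0 ≤ w x * x k := fun x hx =>
        mul_nonneg (hw x hx) ((hSsub x hx).1 k)
      have hterm : w p * p k = 0 := (Finset.sum_eq_zero_iff_of_nonneg hnn).1 hsum p hp
      rcases mul_eq_zero.1 hterm with h | h
      · exact absurd h hwp
      · exact h
    have hL : ∑ p ∈ S, ((w p : ℝ) : EReal) * klDiv p q
        = ((∑ p ∈ S, w p * realKl p q : ℝ) : EReal) := by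
      rw [coe_sum]
      apply Finset.sum_congr rfl
      intro p hp
      by_cases h0 : w p = 0
      · rw [h0, EReal.coe_zero, EReal.zero_mul, zero_mul, EReal.coe_zero]
      · rw [klDiv_eq_coe (hwcond p hp h0), ← EReal.coe_mul]
    have hR : ∑ p ∈ S, ((β p : ℝ) : EReal) * klDiv p q
        = ((∑ p ∈ S, β p * realKl p q : ℝ) : EReal) := by
      rw [coe_sum]
      apply Finset.sum_congr rfl
      intro p hp
      by_cases h0 : β p = 0
      · rw [h0, EReal.coe_zero, EReal.zero_mul, zero_mul, EReal.coe_zero]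
      · rw [klDiv_eq_coe (hβcond p hp h0), ← EReal.coe_mul]
    rw [hL, hR, EReal.coe_le_coe_iff]
    rw [sum_realKl_eq S q w hwcond, sum_realKl_eq S q β hβcond]
    simp only [mix]
    exact sub_le_sub_right ent _

/-- the trivial case of support reduction -/
lemma base {c : ℕ} (S : Finset (Fin c → ℝ)) (hSsub : ∀ p ∈ S, p ∈ simplex c)
    (w : (Fin c → ℝ) → ℝ) (hcard : (S.filter (fun p => w p ≠ 0)).card ≤ c)
    (hw : ∀ p ∈ S, 0 ≤ w p) :
    ∃ β : (Fin c → ℝ) → ℝ, (∀ p, 0 ≤ β p) ∧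
      (S.filter (fun p => β p ≠ 0)).card ≤ c ∧
      (∑ p ∈ S, β p = ∑ p ∈ S, w p) ∧
      (∀ k, ∑ p ∈ S, β p * p k = ∑ p ∈ S, w p * p k) ∧
      (∑ p ∈ S, w p * Hfun p ≤ ∑ p ∈ S, β p * Hfun p) := by
  classical
  refine ⟨fun p => if p ∈ S then w p else 0, ?_, ?_, ?_, ?_, ?_⟩
  · intro p
    dsimp only
    split_ifs with h
    · exact hw p h
    · exact le_refl 0
  · refine le_trans (le_of_eq ?_) hcard
    congr 1
    apply Finset.filter_congr
    intro p hp
    simp [hp]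
  · exact Finset.sum_congr rfl (fun p hp => by simp [hp])
  · intro k
    exact Finset.sum_congr rfl (fun p hp => by simp [hp])
  · exact le_of_eq (Finset.sum_congr rfl (fun p hp => by simp [hp])).symm

/-- Support reduction: any weight vector on `S` can be replaced by one supported on at most
`c` points, preserving the total mass and the mixture, and not decreasing `∑ w p * Hfun p`. -/
lemma reduce {c : ℕ} (S : Finset (Fin c → ℝ)) (hSsub : ∀ p ∈ S, p ∈ simplex c) :
    ∀ (n : ℕ) (w : (Fin c → ℝ) → ℝ), (S.filter (fun p => w p ≠ 0)).card ≤ n →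
      (∀ p ∈ S, 0 ≤ w p) →
      ∃ β : (Fin c → ℝ) → ℝ, (∀ p, 0 ≤ β p) ∧
        (S.filter (fun p => β p ≠ 0)).card ≤ c ∧
        (∑ p ∈ S, β p = ∑ p ∈ S, w p) ∧
        (∀ k, ∑ p ∈ S, β p * p k = ∑ p ∈ S, w p * p k) ∧
        (∑ p ∈ S, w p * Hfun p ≤ ∑ p ∈ S, β p * Hfun p) := by
  classical
  intro n
  induction n with
  | zero =>
    intro w hcard hw
    exact base S hSsub w (le_trans hcard (Nat.zero_le c)) hw
  | succ n ih =>
    intro w hcard hw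
    by_cases hc : (S.filter (fun p => w p ≠ 0)).card ≤ c
    · exact base S hSsub w hc hw
    · push_neg at hc
      set T := S.filter (fun p => w p ≠ 0) with hT
      have hTS : T ⊆ S := Finset.filter_subset _ _
      have hrank : Module.finrank ℝ (Fin c → ℝ) < T.card := by
        rw [Module.finrank_fin_fun]; exact hc
      obtain ⟨g, hgsum, x₀, hx₀T, hgx₀⟩ :=
        Module.exists_nontrivial_relation_of_finrank_lt_card hrank
      obtain ⟨γ, hγsum, hγne, hγent⟩ :
          ∃ γ : (Fin c → ℝ) → ℝ, ∑ p ∈ T, γ p • p = 0 ∧ (∃ x ∈ T, γ x ≠ 0) ∧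
            0 ≤ ∑ p ∈ T, γ p * Hfun p := by
        by_cases he : 0 ≤ ∑ p ∈ T, g p * Hfun p
        · exact ⟨g, hgsum, ⟨x₀, hx₀T, hgx₀⟩, he⟩
        · refine ⟨fun p => -g p, ?_, ⟨x₀, hx₀T, by simpa using hgx₀⟩, ?_⟩
          · simp only [neg_smul, Finset.sum_neg_distrib, hgsum, neg_zero]
          · simp only [neg_mul, Finset.sum_neg_distrib]
            linarith [lt_of_not_ge he]
      have hγk : ∀ k, ∑ p ∈ T, γ p * p k = 0 := by
        intro k
        have h1 := congrFun hγsum k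
        simpa [Finset.sum_apply] using h1
      have hγ0 : ∑ p ∈ T, γ p = 0 := by
        calc ∑ p ∈ T, γ p = ∑ p ∈ T, ∑ k, γ p * p k :=
              Finset.sum_congr rfl (fun p hp => by
                rw [← Finset.mul_sum, (hSsub p (hTS hp)).2, mul_one])
          _ = ∑ k, ∑ p ∈ T, γ p * p k := Finset.sum_comm
          _ = 0 := by simp [hγk]
      have hneg : ∃ p ∈ T, γ p < 0 := by
        by_contra hno
        push_neg at hno
        obtain ⟨x, hxT, hx⟩ := hγne
        exact hx ((Finset.sum_eq_zero_iff_of_nonneg (fun p hp => hno p hp)).1 hγ0 x hxT)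
      set N := T.filter (fun p => γ p < 0) with hN
      have hNne : N.Nonempty := by
        obtain ⟨p, hpT, hpγ⟩ := hneg
        exact ⟨p, Finset.mem_filter.2 ⟨hpT, hpγ⟩⟩
      obtain ⟨p₀, hp₀N, hp₀min⟩ := Finset.exists_min_image N (fun p => w p / (-γ p)) hNne
      have hp₀T : p₀ ∈ T := (Finset.mem_filter.1 hp₀N).1
      have hγp₀ : γ p₀ < 0 := (Finset.mem_filter.1 hp₀N).2
      have hwp₀pos : 0 < w p₀ :=
        ((hw p₀ (hTS hp₀T)).lt_of_ne (Ne.symm (Finset.mem_filter.1 hp₀T).2))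
      set t := w p₀ / (-γ p₀) with ht
      have htpos : 0 ≤ t := le_of_lt (div_pos hwp₀pos (neg_pos.2 hγp₀))
      set w' := fun p => if p ∈ T then w p + t * γ p else 0 with hw'
      have hw'nn : ∀ p, 0 ≤ w' p := by
        intro p
        rw [hw']
        dsimp only
        split_ifs with hpT
        · by_cases hpneg : γ p < 0
          · have hmin : t ≤ w p / (-γ p) := hp₀min p (Finset.mem_filter.2 ⟨hpT, hpneg⟩)
            have hpos : 0 < -γ p := neg_pos.2 hpneg
            have h2 : t * (-γ p) ≤ w p := by
              rw [← le_div_iff₀ hpos] at *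
              exact hmin
            nlinarith
          · have h1 : 0 ≤ γ p := not_lt.1 hpneg
            have h2 : 0 ≤ w p := hw p (hTS hpT)
            positivity
        · exact le_refl 0
      have hsum' : ∀ f : (Fin c → ℝ) → ℝ,
          ∑ p ∈ S, w' p * f p = ∑ p ∈ S, w p * f p + t * ∑ p ∈ T, γ p * f p := by
        intro f
        have h1 : ∀ p ∈ S, w' p * f p
            = w p * f p + (if p ∈ T then t * (γ p * f p) else 0) := by
          intro p hp
          rw [hw']
          dsimp only
          split_ifs with hpT
          · ring
          · have hwp : w p = 0 := by
              by_contra h0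
              exact hpT (Finset.mem_filter.2 ⟨hp, h0⟩)
            simp [hwp]
        rw [Finset.sum_congr rfl h1, Finset.sum_add_distrib]
        congr 1
        rw [Finset.sum_ite_mem, Finset.inter_eq_right.2 hTS, ← Finset.mul_sum]
      have hw'p₀ : w' p₀ = 0 := by
        rw [hw']
        dsimp only
        rw [if_pos hp₀T, ht]
        have hne : γ p₀ ≠ 0 := ne_of_lt hγp₀
        have h2 : γ p₀ / -γ p₀ = -1 := by
          rw [div_neg, div_self hne]
        rw [div_mul_eq_mul_div, mul_div_assoc, h2]
        ring
      have hsub : S.filter (fun p => w' p ≠ 0) ⊆ T.erase p₀ := by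
        intro p hp
        obtain ⟨hpS, hpne⟩ := Finset.mem_filter.1 hp
        have hpT : p ∈ T := by
          by_contra hpT
          exact hpne (by rw [hw']; dsimp only; rw [if_neg hpT])
        refine Finset.mem_erase.2 ⟨?_, hpT⟩
        rintro rfl
        exact hpne hw'p₀
      have hcard' : (S.filter (fun p => w' p ≠ 0)).card ≤ n := by
        have h1 : (S.filter (fun p => w' p ≠ 0)).card ≤ (T.erase p₀).card :=
          Finset.card_le_card hsub
        have h2 : (T.erase p₀).card = T.card - 1 := Finset.card_erase_of_mem hp₀T
        have h3 : 1 ≤ T.card := Finset.card_pos.2 ⟨p₀, hp₀T⟩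
        omega
      obtain ⟨β, hβnn, hβcard, hβsum, hβmix, hβent⟩ := ih w' hcard' (fun p _ => hw'nn p)
      refine ⟨β, hβnn, hβcard, ?_, ?_, ?_⟩
      · have h1 := hsum' (fun _ => 1)
        simp only [mul_one, hγ0, mul_zero, add_zero] at h1
        rw [← h1]
        have h2 := hsum' (fun _ => 1)
        simp only [mul_one] at h2 ⊢
        calc ∑ p ∈ S, β p = ∑ p ∈ S, w' p := by
              have := hβsum
              simpa using this
          _ = ∑ p ∈ S, w' p := rfl
      · intro k
        have h1 := hsum' (fun p => p k)
        simp only [hγk k, mul_zero, add_zero] at h1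
        rw [hβmix k, h1]
      · have h1 := hsum' Hfun
        have h2 : ∑ p ∈ S, w p * Hfun p ≤ ∑ p ∈ S, w' p * Hfun p := by
          rw [h1]
          exact le_add_of_nonneg_right (mul_nonneg htpos hγent)
        exact le_trans h2 hβent


lemma capacityF_mono {c : ℕ} {A S : Finset (Fin c → ℝ)} (hAS : A ⊆ S) :
    capacityF A ≤ capacityF S := by
  classical
  rw [capacityF, capacityF]
  apply iSup_le
  rintro ⟨α, hαnn, hαsum⟩
  have hnn : ∀ p, 0 ≤ (if p ∈ A then α p else 0) := by
    intro p
    split_ifs with h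
    · exact hαnn p
    · exact le_refl 0
  have hsum : ∑ p ∈ S, (if p ∈ A then α p else 0) = 1 := by
    rw [Finset.sum_ite_mem, Finset.inter_eq_right.2 hAS, hαsum]
  have heq : (⨅ q : simplex c, ∑ p ∈ A, ((α p : ℝ) : EReal) * klDiv p q.1)
      = ⨅ q : simplex c, ∑ p ∈ S, (((if p ∈ A then α p else 0 : ℝ)) : EReal) * klDiv p q.1 := by
    apply iInf_congr
    intro q
    rw [← Finset.sum_subset hAS]
    · exact Finset.sum_congr rfl fun p hp => by rw [if_pos hp]
    · intro p _ hpA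
      rw [if_neg hpA, EReal.coe_zero, EReal.zero_mul]
  rw [heq]
  exact le_iSup (fun (α : {α : (Fin c → ℝ) → ℝ // (∀ p, 0 ≤ α p) ∧ ∑ p ∈ S, α p = 1}) =>
    ⨅ q : simplex c, ∑ p ∈ S, ((α.1 p : ℝ) : EReal) * klDiv p q.1)
    ⟨fun p => if p ∈ A then α p else 0, hnn, hsum⟩

end RashomonAux

/-- for any finite multiplicity set `S ⊆ Δ_c`, at most `c` of its
scores suffice to achieve the Rashomon Capacity of the whole set. -/
theorem capacity_achieved_by_c_scores (c : ℕ) (S : Finset (Fin c → ℝ))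
    (hS : S.Nonempty) (hSsub : ↑S ⊆ simplex c) :
    ∃ A : Finset (Fin c → ℝ), A ⊆ S ∧ A.card ≤ c ∧ capacityF A = capacityF S := by
  classical
  open RashomonAux in
  have hSsub' : ∀ p ∈ S, p ∈ simplex c := fun p hp => hSsub hp
  set 𝒜 := S.powerset.filter (fun A => A.card ≤ c) with h𝒜
  have h𝒜ne : 𝒜.Nonempty := ⟨∅, by simp [h𝒜]⟩
  obtain ⟨A₀, hA₀mem, hA₀max⟩ := Finset.exists_max_image 𝒜 capacityF h𝒜ne
  have hA₀S : A₀ ⊆ S := Finset.mem_powerset.1 (Finset.mem_filter.1 hA₀mem).1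
  have hA₀c : A₀.card ≤ c := (Finset.mem_filter.1 hA₀mem).2
  refine ⟨A₀, hA₀S, hA₀c, le_antisymm (RashomonAux.capacityF_mono hA₀S) ?_⟩
  rw [capacityF]
  apply iSup_le
  rintro ⟨w, hwnn, hwsum⟩
  obtain ⟨β, hβnn, hβcard, hβsum, hβmix, hβent⟩ :=
    RashomonAux.reduce S hSsub' (S.filter (fun p => w p ≠ 0)).card w le_rfl (fun p _ => hwnn p)
  set A := S.filter (fun p => β p ≠ 0) with hA
  have hAS : A ⊆ S := Finset.filter_subset _ _
  have hAmem : A ∈ 𝒜 := Finset.mem_filter.2 ⟨Finset.mem_powerset.2 hAS, hβcard⟩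
  have hβA : ∑ p ∈ A, β p = 1 := by
    rw [hA, Finset.sum_filter_ne_zero, hβsum, hwsum]
  have step1 : (⨅ q : simplex c, ∑ p ∈ S, ((w p : ℝ) : EReal) * klDiv p q.1)
      ≤ capacityF A := by
    rw [capacityF]
    refine le_trans ?_ (le_iSup
      (fun (α : {α : (Fin c → ℝ) → ℝ // (∀ p, 0 ≤ α p) ∧ ∑ p ∈ A, α p = 1}) =>
        ⨅ q : simplex c, ∑ p ∈ A, ((α.1 p : ℝ) : EReal) * klDiv p q.1)
      ⟨β, hβnn, hβA⟩)
    apply iInf_mono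
    intro q
    have h1 : ∑ p ∈ S, ((w p : ℝ) : EReal) * klDiv p q.1
        ≤ ∑ p ∈ S, ((β p : ℝ) : EReal) * klDiv p q.1 :=
      RashomonAux.key S hSsub' q.1 w β (fun p _ => hwnn p) (fun p _ => hβnn p) hβmix hβent
    refine le_trans h1 (le_of_eq ?_)
    rw [← Finset.sum_subset hAS]
    intro p hpS hpA
    have hβ0 : β p = 0 := by
      by_contra h0
      exact hpA (Finset.mem_filter.2 ⟨hpS, h0⟩)
    rw [hβ0, EReal.coe_zero, EReal.zero_mul]
  exact le_trans step1 (hA₀max A hAmem)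
end
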